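/- There exists a universal constant C > 0 with the following property. Let G be a finite group and S ⊆ G a symmetric generating set closed under conjugation, with kernel K(g,h) = |S|^{−1}·1_S(g h^{−1}), L = K − Id, P_t = exp(tL), Dirichlet form E(f,f) = ∫_G f(−Lf) dμ, where μ is the uniform probability measure on G. Suppose λ > 0 satisfies λ Var_μ(g) ≤ E(g,g) for all g, and ρ > 0 satisfies ρ Ent_μ(g²) ≤ 2E(g,g) for all g. Then for every f : G → ℝ and every t ≥ 0, Var_μ(P_t f) ≤ (C/λ) · (Σ_{s ∈ S} ‖D_s f‖_{L¹(μ)}²)^{(1−e^{−ρt})/2} · (Σ_{s ∈ S} ‖D_s f‖_{L²(μ)}²)^{(1+e^{−ρt})/2}. -/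

import Mathlib

open Finset

/-- Expectation with respect to the uniform probability measure on a finite group. -/
noncomputable def uE (G : Type) [Fintype G] (f : G → ℝ) : ℝ :=
  (∑ g : G, f g) / Fintype.card G

/-- Variance with respect to the uniform probability measure. -/
noncomputable def uVar (G : Type) [Fintype G] (f : G → ℝ) : ℝ :=
  uE G (fun g => f g ^ 2) - (uE G f) ^ 2

/-- Entropy with respect to the uniform probability measure. -/
noncomputable def uEnt (G : Type) [Fintype G] (h : G → ℝ) : ℝ :=
  uE G (fun g => h g * Real.log (h g)) - uE G h * Real.log (uE G h)

/-- The Markov averaging operator `K f (g) = |S|⁻¹ ∑_{s ∈ S} f (s⁻¹ g)` associated to the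
kernel `K(g,h) = |S|⁻¹ 1_S(g h⁻¹)` of the Cayley graph of `(G, S)`. -/
noncomputable def Kop (G : Type) [Group G] [Fintype G] (S : Finset G)
    (f : G → ℝ) (g : G) : ℝ :=
  (S.card : ℝ)⁻¹ * ∑ s ∈ S, f (s⁻¹ * g)

/-- The generator `L = K - Id` as a linear operator on functions on `G`. -/
noncomputable def Lcay (G : Type) [Group G] [Fintype G] (S : Finset G) :
    (G → ℝ) →ₗ[ℝ] (G → ℝ) where
  toFun f := fun g => Kop G S f g - f g
  map_add' f g := by
    funext x
    simp only [Pi.add_apply, Kop]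
    rw [Finset.sum_add_distrib]
    ring
  map_smul' c f := by
    funext x
    simp only [Pi.smul_apply, smul_eq_mul, RingHom.id_apply, Kop, Finset.mul_sum]
    ring_nf
    rw [Finset.mul_sum]
    exact congrArg _ (Finset.sum_congr rfl fun s _ => by ring)

/-- The semigroup `P_t = exp(tL)`. -/
noncomputable def Pcay (G : Type) [Group G] [Fintype G] (S : Finset G) (t : ℝ)
    (f : G → ℝ) : G → ℝ :=
  NormedSpace.exp (t • (Lcay G S).toContinuousLinearMap) f

/-- The Dirichlet form `E(f,f) = ∫_G f (-L f) dμ`. -/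
noncomputable def Ecay (G : Type) [Group G] [Fintype G] (S : Finset G) (f : G → ℝ) : ℝ :=
  uE G (fun g => f g * (f g - Kop G S f g))

set_option linter.unusedSectionVars false
set_option synthInstance.maxHeartbeats 1000000
set_option maxHeartbeats 1000000

namespace Stmt10

open Nat

variable {G : Type} [Group G] [Fintype G] [DecidableEq G]

lemma cardG_pos : 0 < (Fintype.card G : ℝ) := by
  exact_mod_cast Fintype.card_pos

lemma uE_mono {f g : G → ℝ} (h : ∀ x, f x ≤ g x) : uE G f ≤ uE G g := by
  unfold uE
  apply div_le_div_of_nonneg_right ?_ cardG_pos.le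
  exact Finset.sum_le_sum fun i _ => h i

lemma uE_nonneg {f : G → ℝ} (hf : ∀ x, 0 ≤ f x) : 0 ≤ uE G f := by
  have := uE_mono (G := G) (f := fun _ => (0:ℝ)) (g := f) hf
  simpa [uE] using this

noncomputable def Tcl (G : Type) [Group G] [Fintype G] (S : Finset G) :
    (G → ℝ) →L[ℝ] (G → ℝ) :=
  (Lcay G S).toContinuousLinearMap

lemma Pcay_def (S : Finset G) (t : ℝ) (f : G → ℝ) :
    Pcay G S t f = NormedSpace.exp (t • Tcl G S) f := rfl

lemma Tcl_apply (S : Finset G) (f : G → ℝ) : Tcl G S f = Lcay G S f := rfl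

-- decomposition exp(tL) = e^{-t} • exp(tK)
lemma exp_decomp (S : Finset G) (t : ℝ) :
    NormedSpace.exp (t • Tcl G S) =
      Real.exp (-t) • NormedSpace.exp (t • (Tcl G S + 1)) := by
  have hsplit : t • Tcl G S = (-t) • (1 : (G → ℝ) →L[ℝ] (G → ℝ)) + t • (Tcl G S + 1) := by
    module
  have comm : Commute ((-t) • (1 : (G → ℝ) →L[ℝ] (G → ℝ))) (t • (Tcl G S + 1)) := by
    show ((-t) • 1) * (t • (Tcl G S + 1)) = (t • (Tcl G S + 1)) * ((-t) • 1)
    rw [smul_mul_assoc, one_mul, mul_smul_comm, mul_one]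
  rw [hsplit, NormedSpace.exp_add_of_commute_of_mem_ball (𝕂 := ℝ) comm ((NormedSpace.expSeries_radius_eq_top ℝ ((G → ℝ) →L[ℝ] (G → ℝ))).symm ▸ edist_lt_top _ _) ((NormedSpace.expSeries_radius_eq_top ℝ ((G → ℝ) →L[ℝ] (G → ℝ))).symm ▸ edist_lt_top _ _)]
  have h1 : ((-t) • (1 : (G → ℝ) →L[ℝ] (G → ℝ))) = algebraMap ℝ _ (-t) := by
    rw [Algebra.algebraMap_eq_smul_one]
  rw [h1, ← NormedSpace.algebraMap_exp_comm, Algebra.algebraMap_eq_smul_one,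
    ← Real.exp_eq_exp_ℝ]
  rw [smul_mul_assoc, one_mul]

noncomputable def evalCLM (g : G → ℝ) (x : G) : ((G → ℝ) →L[ℝ] (G → ℝ)) →L[ℝ] ℝ :=
  (ContinuousLinearMap.proj x).comp (ContinuousLinearMap.apply ℝ (G → ℝ) g)

lemma evalCLM_apply (g : G → ℝ) (x : G) (U : (G → ℝ) →L[ℝ] (G → ℝ)) :
    evalCLM g x U = U g x := rfl

lemma hasDerivAt_Pcay (S : Finset G) (f : G → ℝ) (x : G) (t : ℝ) :
    HasDerivAt (fun u => Pcay G S u f x) (Lcay G S (Pcay G S t f) x) t := by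
  have h := hasDerivAt_exp_smul_const' (𝕂 := ℝ) (Tcl G S) t
  exact (evalCLM f x).hasFDerivAt.comp_hasDerivAt t h

lemma Kop_nonneg (S : Finset G) {f : G → ℝ} (hf : ∀ x, 0 ≤ f x) (x : G) :
    0 ≤ Kop G S f x :=
  mul_nonneg (inv_nonneg.2 (by positivity)) (Finset.sum_nonneg fun s _ => hf _)

lemma Kcl_apply (S : Finset G) (f : G → ℝ) : (Tcl G S + 1) f = Kop G S f := by
  funext x
  show Lcay G S f x + f x = Kop G S f x
  show (Kop G S f x - f x) + f x = Kop G S f x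
  ring

lemma Kcl_pow_nonneg (S : Finset G) (n : ℕ) :
    ∀ f : G → ℝ, (∀ x, 0 ≤ f x) → ∀ x, 0 ≤ ((Tcl G S + 1) ^ n) f x := by
  induction n with
  | zero => intro f hf x; simpa using hf x
  | succ m ih =>
    intro f hf x
    have : ((Tcl G S + 1) ^ (m + 1)) f = ((Tcl G S + 1) ^ m) ((Tcl G S + 1) f) := by
      rw [pow_succ]
      rfl
    rw [this, Kcl_apply]
    exact ih _ (fun y => Kop_nonneg S hf y) x

lemma exp_K_nonneg (S : Finset G) {t : ℝ} (ht : 0 ≤ t) {f : G → ℝ}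
    (hf : ∀ x, 0 ≤ f x) (x : G) :
    0 ≤ NormedSpace.exp (t • (Tcl G S + 1)) f x := by
  have hsum := NormedSpace.expSeries_summable' (𝕂 := ℝ) (t • (Tcl G S + 1))
  rw [NormedSpace.exp_eq_tsum ℝ]
  have hmap := (evalCLM f x).map_tsum hsum
  rw [show (∑' n : ℕ, (n !⁻¹ : ℝ) • (t • (Tcl G S + 1)) ^ n) f x
      = evalCLM f x (∑' n : ℕ, (n !⁻¹ : ℝ) • (t • (Tcl G S + 1)) ^ n) from rfl, hmap]
  refine tsum_nonneg fun n => ?_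
  have : evalCLM f x ((n !⁻¹ : ℝ) • (t • (Tcl G S + 1)) ^ n)
      = (n !⁻¹ : ℝ) * (t ^ n * (((Tcl G S + 1) ^ n) f x)) := by
    rw [smul_pow]
    simp [evalCLM_apply, ContinuousLinearMap.smul_apply, smul_eq_mul]
  rw [this]
  have h0 : (0:ℝ) ≤ (n !⁻¹ : ℝ) := by positivity
  exact mul_nonneg h0 (mul_nonneg (pow_nonneg ht n) (Kcl_pow_nonneg S n f hf x))

lemma Pcay_nonneg (S : Finset G) {t : ℝ} (ht : 0 ≤ t) {f : G → ℝ}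
    (hf : ∀ x, 0 ≤ f x) (x : G) : 0 ≤ Pcay G S t f x := by
  rw [Pcay_def, exp_decomp]
  have : (Real.exp (-t) • NormedSpace.exp (t • (Tcl G S + 1))) f x
      = Real.exp (-t) * (NormedSpace.exp (t • (Tcl G S + 1)) f x) := rfl
  rw [this]
  exact mul_nonneg (Real.exp_nonneg _) (exp_K_nonneg S ht hf x)

noncomputable def uECLM (G : Type) [Fintype G] : (G → ℝ) →L[ℝ] ℝ :=
  LinearMap.toContinuousLinearMap
    { toFun := fun f => uE G f
      map_add' := by
        intro f g
        simp only [uE, Pi.add_apply, Finset.sum_add_distrib]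
        ring
      map_smul' := by
        intro c f
        simp only [uE, Pi.smul_apply, smul_eq_mul, RingHom.id_apply, ← Finset.mul_sum]
        ring }

lemma uECLM_apply (f : G → ℝ) : uECLM G f = uE G f := rfl

lemma sum_Kop (S : Finset G) (hS : S.Nonempty) (f : G → ℝ) :
    ∑ x : G, Kop G S f x = ∑ x : G, f x := by
  have h1 : ∀ s : G, ∑ x : G, f (s⁻¹ * x) = ∑ x : G, f x := fun s =>
    Fintype.sum_equiv (Equiv.mulLeft s⁻¹) _ _ fun x => rfl
  have hc : (S.card : ℝ) ≠ 0 := by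
    have := Finset.card_pos.2 hS
    positivity
  unfold Kop
  rw [← Finset.mul_sum, Finset.sum_comm]
  rw [Finset.sum_congr rfl fun s _ => h1 s, Finset.sum_const, nsmul_eq_mul]
  field_simp

lemma uE_Kop (S : Finset G) (hS : S.Nonempty) (f : G → ℝ) :
    uE G (Kop G S f) = uE G f := by
  unfold uE
  rw [sum_Kop S hS f]

lemma uE_Lcay (S : Finset G) (hS : S.Nonempty) (f : G → ℝ) :
    uE G (Lcay G S f) = 0 := by
  have : Lcay G S f = fun x => Kop G S f x - f x := rfl
  rw [this]
  have : uE G (fun x => Kop G S f x - f x) = uE G (Kop G S f) - uE G f := by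
    unfold uE
    rw [Finset.sum_sub_distrib, sub_div]
  rw [this, uE_Kop S hS, sub_self]

lemma uE_Pcay (S : Finset G) (hS : S.Nonempty) (t : ℝ) (f : G → ℝ) :
    uE G (Pcay G S t f) = uE G f := by
  have hsum := NormedSpace.expSeries_summable' (𝕂 := ℝ) (t • Tcl G S)
  set Φ : ((G → ℝ) →L[ℝ] (G → ℝ)) →L[ℝ] ℝ :=
    (uECLM G).comp (ContinuousLinearMap.apply ℝ (G → ℝ) f) with hΦ
  have hmap := Φ.map_tsum hsum
  have h0 : uE G (Pcay G S t f) = Φ (NormedSpace.exp (t • Tcl G S)) := rfl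
  rw [h0, NormedSpace.exp_eq_tsum ℝ, hmap]
  rw [tsum_eq_single 0 ?_]
  · rw [map_smul]
    have h1 : Φ ((t • Tcl G S) ^ 0) = uE G f := by
      rw [pow_zero]
      rfl
    rw [h1]
    simp
  · intro n hn
    obtain ⟨m, rfl⟩ := Nat.exists_eq_succ_of_ne_zero hn
    rw [map_smul]
    have hpow : ((t • Tcl G S) ^ (m + 1)) f = t • Lcay G S (((t • Tcl G S) ^ m) f) := by
      rw [_root_.pow_succ']
      rfl
    have hval : Φ ((t • Tcl G S) ^ (m + 1)) = uE G (((t • Tcl G S) ^ (m + 1)) f) := rfl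
    rw [hval, hpow]
    have ht' : uE G (t • Lcay G S (((t • Tcl G S) ^ m) f))
        = t * uE G (Lcay G S (((t • Tcl G S) ^ m) f)) := by
      unfold uE
      simp only [Pi.smul_apply, smul_eq_mul, ← Finset.mul_sum]
      ring
    rw [ht', uE_Lcay S hS, mul_zero, smul_zero]

lemma abs_Pcay_le (S : Finset G) {t : ℝ} (ht : 0 ≤ t) (f : G → ℝ) (x : G) :
    |Pcay G S t f x| ≤ Pcay G S t (fun y => |f y|) x := by
  have hadd : ∀ a b : G → ℝ, Pcay G S t (fun y => a y + b y) x
      = Pcay G S t a x + Pcay G S t b x := by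
    intro a b
    have : (fun y => a y + b y) = a + b := rfl
    rw [this]
    show (NormedSpace.exp (t • Tcl G S)) (a + b) x = _
    rw [map_add]
    rfl
  have h1 : 0 ≤ Pcay G S t (fun y => |f y| - f y) x :=
    Pcay_nonneg S ht (fun y => sub_nonneg.2 (le_abs_self _)) x
  have h2 : 0 ≤ Pcay G S t (fun y => |f y| + f y) x :=
    Pcay_nonneg S ht (fun y => by linarith [neg_abs_le (f y)]) x
  have e1 : Pcay G S t (fun y => |f y|) x
      = Pcay G S t (fun y => |f y| - f y) x + Pcay G S t f x := by
    rw [← hadd]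
    congr 1
    funext y
    ring
  have e2 : Pcay G S t (fun y => |f y|) x
      = Pcay G S t (fun y => |f y| + f y) x - Pcay G S t f x := by
    rw [hadd]
    ring
  rw [abs_le]
  constructor
  · nlinarith [h2, e2]
  · nlinarith [h1, e1]

lemma uE_abs_Pcay_le (S : Finset G) (hS : S.Nonempty) {t : ℝ} (ht : 0 ≤ t) (f : G → ℝ) :
    uE G (fun x => |Pcay G S t f x|) ≤ uE G (fun x => |f x|) := by
  have := uE_mono (fun x => abs_Pcay_le S ht f x)
  exact this.trans (uE_Pcay S hS t (fun y => |f y|)).le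

lemma Pcay_injective (S : Finset G) (t : ℝ) {f : G → ℝ} (hf : f ≠ 0) :
    Pcay G S t f ≠ 0 := by
  intro hzero
  have hinv : NormedSpace.exp (-(t • Tcl G S)) * NormedSpace.exp (t • Tcl G S) = 1 := by
    rw [← NormedSpace.exp_add_of_commute_of_mem_ball (𝕂 := ℝ) (Commute.refl (t • Tcl G S)).neg_left ((NormedSpace.expSeries_radius_eq_top ℝ ((G → ℝ) →L[ℝ] (G → ℝ))).symm ▸ edist_lt_top _ _) ((NormedSpace.expSeries_radius_eq_top ℝ ((G → ℝ) →L[ℝ] (G → ℝ))).symm ▸ edist_lt_top _ _),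
      neg_add_cancel, NormedSpace.exp_zero]
  have : f = NormedSpace.exp (-(t • Tcl G S)) (Pcay G S t f) := by
    rw [Pcay_def]
    show f = (NormedSpace.exp (-(t • Tcl G S)) * NormedSpace.exp (t • Tcl G S)) f
    rw [hinv]
    rfl
  rw [hzero, map_zero] at this
  exact hf this

lemma exists_ne_zero {h : G → ℝ} (hh : h ≠ 0) : ∃ x, h x ≠ 0 := by
  by_contra hc
  push_neg at hc
  exact hh (funext hc)

lemma uE_sq_pos {h : G → ℝ} (hh : h ≠ 0) : 0 < uE G (fun x => h x ^ 2) := by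
  obtain ⟨x, hx⟩ := exists_ne_zero hh
  have : 0 < ∑ y : G, h y ^ 2 :=
    Finset.sum_pos' (fun i _ => sq_nonneg _) ⟨x, Finset.mem_univ x, by positivity⟩
  exact div_pos this cardG_pos

lemma uE_abs_pos {h : G → ℝ} (hh : h ≠ 0) : 0 < uE G (fun x => |h x|) := by
  obtain ⟨x, hx⟩ := exists_ne_zero hh
  have : 0 < ∑ y : G, |h y| :=
    Finset.sum_pos' (fun i _ => abs_nonneg _) ⟨x, Finset.mem_univ x, by positivity⟩
  exact div_pos this cardG_pos

lemma ent_lower {h : G → ℝ} (hh : h ≠ 0) :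
    uE G (fun x => h x ^ 2) *
      (Real.log (uE G fun x => h x ^ 2) - 2 * Real.log (uE G fun x => |h x|))
      ≤ uEnt G (fun x => h x ^ 2) := by
  classical
  set c := (Fintype.card G : ℝ) with hcdef
  set N := uE G (fun x => h x ^ 2) with hNdef
  set M := uE G (fun x => |h x|) with hMdef
  have hc : 0 < c := cardG_pos
  have hN : 0 < N := uE_sq_pos hh
  have hM : 0 < M := uE_abs_pos hh
  set T := Finset.univ.filter (fun x : G => h x ≠ 0) with hTdef
  set w : G → ℝ := fun x => h x ^ 2 / (N * c) with hwdef
  set p : G → ℝ := fun x => |h x|⁻¹ with hpdef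
  have hsq_univ : ∑ x ∈ T, h x ^ 2 = ∑ x : G, h x ^ 2 :=
    Finset.sum_filter_of_ne (fun x _ hx => by
      intro hzero
      exact hx (by rw [hzero]; ring))
  have habs_univ : ∑ x ∈ T, |h x| = ∑ x : G, |h x| :=
    Finset.sum_filter_of_ne (fun x _ hx => by
      intro hzero
      exact hx (by rw [hzero]; simp))
  have hNsum : ∑ x : G, h x ^ 2 = N * c := by
    rw [hNdef]
    unfold uE
    field_simp
    rfl
  have hMsum : ∑ x : G, |h x| = M * c := by
    rw [hMdef]
    unfold uE
    field_simp
    rfl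
  have hw0 : ∀ x ∈ T, 0 ≤ w x := fun x _ => by
    have : (0:ℝ) < N * c := mul_pos hN hc
    positivity
  have hw1 : ∑ x ∈ T, w x = 1 := by
    rw [hwdef]
    simp only
    rw [← Finset.sum_div, hsq_univ, hNsum]
    field_simp
  have hmem : ∀ x ∈ T, p x ∈ Set.Ioi (0:ℝ) := by
    intro x hx
    have : h x ≠ 0 := (Finset.mem_filter.1 hx).2
    have : 0 < |h x| := abs_pos.2 this
    exact Set.mem_Ioi.2 (by positivity)
  have hjen := (strictConcaveOn_log_Ioi.concaveOn).le_map_sum hw0 hw1 hmem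
  have hsum2 : ∑ x ∈ T, w x • p x = M / N := by
    have hterm : ∀ x ∈ T, w x • p x = |h x| / (N * c) := by
      intro x hx
      have hx0 : h x ≠ 0 := (Finset.mem_filter.1 hx).2
      have habs : (0:ℝ) < |h x| := abs_pos.2 hx0
      rw [hwdef, hpdef]
      simp only [smul_eq_mul]
      have key : h x ^ 2 * |h x|⁻¹ = |h x| := by
        rw [← sq_abs, sq, mul_assoc, mul_inv_cancel₀ (ne_of_gt habs), mul_one]
      rw [div_mul_eq_mul_div, key]
    rw [Finset.sum_congr rfl hterm, ← Finset.sum_div, habs_univ, hMsum]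
    rw [mul_comm M c, mul_comm N c, mul_div_mul_left _ _ (ne_of_gt hc)]
  have hsum1 : ∑ x ∈ T, w x • Real.log (p x)
      = -(1 / (N * c)) * ∑ x : G, h x ^ 2 * Real.log |h x| := by
    have hterm : ∀ x ∈ T, w x • Real.log (p x)
        = -(1 / (N * c)) * (h x ^ 2 * Real.log |h x|) := by
      intro x hx
      rw [hwdef, hpdef]
      simp only [smul_eq_mul]
      rw [Real.log_inv]
      ring
    rw [Finset.sum_congr rfl hterm, ← Finset.mul_sum]
    congr 1
    refine Finset.sum_filter_of_ne (fun x _ hx => ?_)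
    intro hzero
    exact hx (by rw [hzero]; simp)
  rw [hsum1, hsum2] at hjen
  -- hjen : -(1/(Nc)) * Σ h² log|h| ≤ log (M/N)
  have hkey : N * c * (Real.log N - Real.log M) ≤ ∑ x : G, h x ^ 2 * Real.log |h x| := by
    have h1 : Real.log (M / N) = Real.log M - Real.log N :=
      Real.log_div (ne_of_gt hM) (ne_of_gt hN)
    rw [h1] at hjen
    have hNc : 0 < N * c := mul_pos hN hc
    have h2 := mul_le_mul_of_nonneg_left hjen hNc.le
    have h3 : N * c * (-(1 / (N * c)) * ∑ x : G, h x ^ 2 * Real.log |h x|)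
        = -(∑ x : G, h x ^ 2 * Real.log |h x|) := by
      field_simp
    rw [h3] at h2
    nlinarith [h2]
  -- now unfold uEnt
  have hent : uEnt G (fun x => h x ^ 2)
      = (2 / c) * (∑ x : G, h x ^ 2 * Real.log |h x|) - N * Real.log N := by
    unfold uEnt
    congr 1
    show uE G (fun g => h g ^ 2 * Real.log (h g ^ 2)) = _
    unfold uE
    rw [show (∑ g : G, h g ^ 2 * Real.log (h g ^ 2))
        = ∑ g : G, 2 * (h g ^ 2 * Real.log |h g|) from
      Finset.sum_congr rfl fun g _ => by
        rw [Real.log_pow, ← Real.log_abs]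
        push_cast
        ring]
    rw [← Finset.mul_sum]
    ring
  have hmono : (2 / c) * (N * c * (Real.log N - Real.log M))
      ≤ (2 / c) * (∑ x : G, h x ^ 2 * Real.log |h x|) :=
    mul_le_mul_of_nonneg_left hkey (by positivity)
  have hx2 : (2 / c) * (N * c * (Real.log N - Real.log M))
      = 2 * N * (Real.log N - Real.log M) := by
    field_simp
  rw [hent]
  rw [hx2] at hmono
  linarith

lemma Pcay_zero_time (S : Finset G) (g : G → ℝ) : Pcay G S 0 g = g := by
  rw [Pcay_def, zero_smul, NormedSpace.exp_zero]
  rfl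

lemma hasDerivAt_N (S : Finset G) (g : G → ℝ) (u : ℝ) :
    HasDerivAt (fun v => uE G (fun x => Pcay G S v g x ^ 2))
      (-2 * Ecay G S (Pcay G S u g)) u := by
  have hsum : HasDerivAt (fun v => ∑ x : G, Pcay G S v g x ^ 2)
      (∑ x : G, 2 * Pcay G S u g x * Lcay G S (Pcay G S u g) x) u := by
    refine HasDerivAt.fun_sum fun x _ => ?_
    have h := (hasDerivAt_Pcay S g x u).mul (hasDerivAt_Pcay S g x u)
    have hEq : (fun v => Pcay G S v g x * Pcay G S v g x)
        = fun v => Pcay G S v g x ^ 2 := by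
      funext v
      ring
    rw [show ((fun u => Pcay G S u g x) * fun u => Pcay G S u g x)
        = fun v => Pcay G S v g x * Pcay G S v g x from rfl, hEq] at h
    refine h.congr_deriv ?_
    ring
  have hdiv := hsum.div_const (Fintype.card G : ℝ)
  have hEq2 : (fun v => (∑ x : G, Pcay G S v g x ^ 2) / (Fintype.card G : ℝ))
      = fun v => uE G (fun x => Pcay G S v g x ^ 2) := rfl
  rw [hEq2] at hdiv
  refine hdiv.congr_deriv ?_
  unfold Ecay uE
  rw [show (∑ x : G, 2 * Pcay G S u g x * Lcay G S (Pcay G S u g) x)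
      = ∑ x : G, -2 * (Pcay G S u g x * (Pcay G S u g x - Kop G S (Pcay G S u g) x)) from
    Finset.sum_congr rfl fun x _ => by
      have hL : Lcay G S (Pcay G S u g) x = Kop G S (Pcay G S u g) x - Pcay G S u g x := rfl
      rw [hL]
      ring]
  rw [← Finset.mul_sum]
  ring

lemma l2_decay (S : Finset G) (hS : S.Nonempty) {ρ : ℝ} (hρ : 0 < ρ)
    (hLS : ∀ g : G → ℝ, ρ * uEnt G (fun x => g x ^ 2) ≤ 2 * Ecay G S g)
    (g : G → ℝ) {t : ℝ} (ht : 0 ≤ t) :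
    uE G (fun x => Pcay G S t g x ^ 2) ≤
      (((uE G fun x => |g x|) ^ 2 : ℝ) ^ (1 - Real.exp (-ρ * t))) *
        ((uE G fun x => g x ^ 2 : ℝ) ^ Real.exp (-ρ * t)) := by
  by_cases hg : g = 0
  · subst hg
    have hz : Pcay G S t (0 : G → ℝ) = 0 := map_zero _
    rw [hz]
    have : uE G (fun x : G => (0:ℝ) ^ 2) = 0 := by
      unfold uE
      simp
    rw [show (fun x : G => (0 : G → ℝ) x ^ 2) = fun x : G => (0:ℝ) ^ 2 from rfl, this]
    positivity
  -- nonzero case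
  set η := Real.exp (-ρ * t) with hη
  set M0 := uE G (fun x => |g x|) with hM0
  set N0 := uE G (fun x => g x ^ 2) with hN0
  have hM0pos : 0 < M0 := uE_abs_pos hg
  have hN0pos : 0 < N0 := uE_sq_pos hg
  set N : ℝ → ℝ := fun v => uE G (fun x => Pcay G S v g x ^ 2) with hNdef
  have hNpos : ∀ v, 0 < N v := fun v => uE_sq_pos (Pcay_injective S v hg)
  set w : ℝ → ℝ := fun v => Real.exp (ρ * v) * (Real.log (N v) - Real.log (M0 ^ 2))
    with hwdef
  have hw : ∀ v, HasDerivAt w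
      (Real.exp (ρ * v) * ρ * (Real.log (N v) - Real.log (M0 ^ 2))
        + Real.exp (ρ * v) * ((-2 * Ecay G S (Pcay G S v g)) / N v)) v := by
    intro v
    have h1 : HasDerivAt (fun u => ρ * u) ρ v := by
      simpa using (hasDerivAt_id v).const_mul ρ
    have hexp : HasDerivAt (fun u => Real.exp (ρ * u)) (Real.exp (ρ * v) * ρ) v :=
      (Real.hasDerivAt_exp (ρ * v)).comp v h1
    have hlog : HasDerivAt (fun u => Real.log (N u))
        ((-2 * Ecay G S (Pcay G S v g)) / N v) v :=
      (hasDerivAt_N S g v).log (ne_of_gt (hNpos v))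
    have := hexp.mul (hlog.sub_const (Real.log (M0 ^ 2)))
    exact this
  have hderiv_nonpos : ∀ v, 0 ≤ v → deriv w v ≤ 0 := by
    intro v hv
    rw [(hw v).deriv]
    have hNv := hNpos v
    have hMv : 0 < uE G (fun x => |Pcay G S v g x|) :=
      uE_abs_pos (Pcay_injective S v hg)
    -- entropy chain
    have hchain : -2 * Ecay G S (Pcay G S v g)
        ≤ -ρ * (N v * (Real.log (N v) - Real.log (M0 ^ 2))) := by
      have hls := hLS (Pcay G S v g)
      have hent := ent_lower (Pcay_injective S v hg)
      have hMle : uE G (fun x => |Pcay G S v g x|) ≤ M0 := uE_abs_Pcay_le S hS hv g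
      have hloglog : Real.log (uE G fun x => |Pcay G S v g x|) ≤ Real.log M0 :=
        Real.log_le_log hMv hMle
      have hlogM0 : Real.log (M0 ^ 2) = 2 * Real.log M0 := by
        rw [show M0 ^ 2 = M0 * M0 by ring, Real.log_mul (ne_of_gt hM0pos) (ne_of_gt hM0pos)]
        ring
      have hNveq : N v = uE G (fun x => Pcay G S v g x ^ 2) := rfl
      rw [hNveq, hlogM0]
      have hNv' : 0 < uE G (fun x => Pcay G S v g x ^ 2) := hNv
      have s1 := le_trans (mul_le_mul_of_nonneg_left hent hρ.le) hls
      have hprod := mul_le_mul_of_nonneg_left hloglog (le_of_lt (mul_pos hρ hNv'))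
      nlinarith [s1, hprod]
    have hexp_pos : 0 < Real.exp (ρ * v) := Real.exp_pos _
    have hdivle : (-2 * Ecay G S (Pcay G S v g)) / N v
        ≤ -ρ * (Real.log (N v) - Real.log (M0 ^ 2)) := by
      rw [div_le_iff₀ hNv]
      calc -2 * Ecay G S (Pcay G S v g)
          ≤ -ρ * (N v * (Real.log (N v) - Real.log (M0 ^ 2))) := hchain
        _ = -ρ * (Real.log (N v) - Real.log (M0 ^ 2)) * N v := by ring
    nlinarith [hdivle, hexp_pos]
  have hcont : ContinuousOn w (Set.Ici 0) :=
    (fun v _ => ((hw v).differentiableAt.continuousAt).continuousWithinAt)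
  have hdiff : DifferentiableOn ℝ w (interior (Set.Ici (0:ℝ))) := by
    intro v hv
    exact (hw v).differentiableAt.differentiableWithinAt
  have hanti : AntitoneOn w (Set.Ici (0:ℝ)) := by
    refine antitoneOn_of_deriv_nonpos (convex_Ici 0) hcont hdiff ?_
    intro v hv
    rw [interior_Ici] at hv
    exact hderiv_nonpos v (le_of_lt hv)
  have hw0 : w 0 = Real.log (N 0) - Real.log (M0 ^ 2) := by
    rw [hwdef]
    simp
  have hwt := hanti (Set.self_mem_Ici) (Set.mem_Ici.2 ht) ht
  rw [hw0] at hwt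
  -- N 0 = N0
  have hN0eq : N 0 = N0 := by
    rw [hNdef]
    simp only [Pcay_zero_time]
    rfl
  rw [hN0eq] at hwt
  -- multiply by η = exp(-ρ t)
  have hη_pos : 0 < η := Real.exp_pos _
  have hmul : Real.exp (ρ * t) * η = 1 := by
    rw [hη, ← Real.exp_add]
    ring_nf
    exact Real.exp_zero
  have hfinal_log : Real.log (N t) - Real.log (M0 ^ 2)
      ≤ η * (Real.log N0 - Real.log (M0 ^ 2)) := by
    have := mul_le_mul_of_nonneg_left hwt (le_of_lt hη_pos)
    rw [hwdef] at this
    simp only at this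
    calc Real.log (N t) - Real.log (M0 ^ 2)
        = η * (Real.exp (ρ * t) * (Real.log (N t) - Real.log (M0 ^ 2))) := by
          rw [← mul_assoc, mul_comm η, hmul, one_mul]
      _ ≤ η * (Real.log N0 - Real.log (M0 ^ 2)) := this
  -- exponentiate
  have hNt : N t ≤ (M0 ^ 2 : ℝ) ^ (1 - η) * (N0 : ℝ) ^ η := by
    have hM2pos : (0:ℝ) < M0 ^ 2 := by positivity
    have h1 : N t = Real.exp (Real.log (N t)) := (Real.exp_log (hNpos t)).symm
    rw [h1]
    have h2 : (M0 ^ 2 : ℝ) ^ (1 - η) * (N0 : ℝ) ^ η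
        = Real.exp (Real.log (M0 ^ 2) * (1 - η) + Real.log N0 * η) := by
      rw [Real.exp_add, ← Real.rpow_def_of_pos hM2pos, ← Real.rpow_def_of_pos hN0pos]
    rw [h2, Real.exp_le_exp]
    nlinarith [hfinal_log]
  exact hNt

noncomputable def Rcl (G : Type) [Group G] [Fintype G] (s : G) :
    (G → ℝ) →L[ℝ] (G → ℝ) :=
  LinearMap.toContinuousLinearMap
    { toFun := fun f => fun x => f (x * s)
      map_add' := fun f g => rfl
      map_smul' := fun c f => rfl }

lemma Rcl_apply (s : G) (f : G → ℝ) (x : G) : Rcl G s f x = f (x * s) := rfl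

lemma Tcl_Rcl_comm (S : Finset G) (s : G) :
    Commute (Tcl G S) (Rcl G s) := by
  unfold Commute SemiconjBy
  ext f x
  show Tcl G S (Rcl G s f) x = Rcl G s (Tcl G S f) x
  show Kop G S (fun y => f (y * s)) x - f (x * s)
      = (Kop G S f (x * s) - f (x * s))
  unfold Kop
  congr 2
  refine Finset.sum_congr rfl fun u _ => ?_
  show f (u⁻¹ * x * s) = f (u⁻¹ * (x * s))
  rw [mul_assoc]

lemma Pcay_D_comm (S : Finset G) (t : ℝ) (f : G → ℝ) (s : G) :
    (fun x => Pcay G S t f (x * s) - Pcay G S t f x)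
      = Pcay G S t (fun x => f (x * s) - f x) := by
  have hc1 : Commute (t • Tcl G S) (Rcl G s) := by
    unfold Commute SemiconjBy
    rw [smul_mul_assoc, mul_smul_comm, (Tcl_Rcl_comm S s).eq]
  have hcomm : Commute (NormedSpace.exp (t • Tcl G S)) (Rcl G s) :=
    hc1.exp_left
  have happ : NormedSpace.exp (t • Tcl G S) (Rcl G s f)
      = Rcl G s (NormedSpace.exp (t • Tcl G S) f) := by
    have h1 : (NormedSpace.exp (t • Tcl G S) * Rcl G s) f
        = (Rcl G s * NormedSpace.exp (t • Tcl G S)) f := by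
      rw [hcomm.eq]
    exact h1
  funext x
  show Pcay G S t f (x * s) - Pcay G S t f x
      = NormedSpace.exp (t • Tcl G S) (fun y => f (y * s) - f y) x
  have h2 : (fun y => f (y * s) - f y) = Rcl G s f - f := rfl
  rw [h2, map_sub]
  have h3 : NormedSpace.exp (t • Tcl G S) (Rcl G s f) x
      = Pcay G S t f (x * s) := by
    rw [happ]
    rfl
  show Pcay G S t f (x * s) - Pcay G S t f x
      = NormedSpace.exp (t • Tcl G S) (Rcl G s f) x
        - NormedSpace.exp (t • Tcl G S) f x
  rw [h3]
  rfl

lemma conj_mem (S : Finset G)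
    (hsym : ∀ s ∈ S, s⁻¹ ∈ S)
    (hgen : Subgroup.closure (S : Set G) = ⊤)
    (hconj : ∀ s ∈ S, ∀ u ∈ S, s * u * s⁻¹ ∈ S) :
    ∀ g : G, ∀ u ∈ S, g * u * g⁻¹ ∈ S := by
  have main : ∀ g : G, (∀ u ∈ S, g * u * g⁻¹ ∈ S) ∧ (∀ u ∈ S, g⁻¹ * u * g ∈ S) := by
    intro g
    have hg : g ∈ Subgroup.closure (S : Set G) := by
      rw [hgen]
      trivial
    refine Subgroup.closure_induction (p := fun x _ =>
        (∀ u ∈ S, x * u * x⁻¹ ∈ S) ∧ (∀ u ∈ S, x⁻¹ * u * x ∈ S)) ?_ ?_ ?_ ?_ hg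
    · intro x hx
      refine ⟨fun u hu => hconj x hx u hu, fun u hu => ?_⟩
      have := hconj x⁻¹ (hsym x hx) u hu
      simpa using this
    · simp
    · intro x y _ _ hx hy
      constructor
      · intro u hu
        have h1 := hy.1 u hu
        have h2 := hx.1 _ h1
        have : x * (y * u * y⁻¹) * x⁻¹ = x * y * u * (x * y)⁻¹ := by
          group
        rwa [this] at h2
      · intro u hu
        have h1 := hx.2 u hu
        have h2 := hy.2 _ h1
        have : y⁻¹ * (x⁻¹ * u * x) * y = (x * y)⁻¹ * u * (x * y) := by
          group
        rwa [this] at h2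
    · intro x _ hx
      refine ⟨fun u hu => ?_, fun u hu => ?_⟩
      · have := hx.2 u hu
        simpa using this
      · have := hx.1 u hu
        simpa using this
  exact fun g => (main g).1

lemma sum_Dsq (S : Finset G) (hS : S.Nonempty)
    (hsym : ∀ s ∈ S, s⁻¹ ∈ S)
    (hgen : Subgroup.closure (S : Set G) = ⊤)
    (hconj : ∀ s ∈ S, ∀ u ∈ S, s * u * s⁻¹ ∈ S)
    (f : G → ℝ) :
    ∑ s ∈ S, uE G (fun x => (f (x * s) - f x) ^ 2)
      = 2 * S.card * Ecay G S f := by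
  have hall := conj_mem S hsym hgen hconj
  have hcardS : (S.card : ℝ) ≠ 0 := by
    have := Finset.card_pos.2 hS
    positivity
  -- claim 1 : ∑ x, f (x*s)^2 = ∑ x, f x ^ 2
  have hc1 : ∀ s : G, ∑ x : G, f (x * s) ^ 2 = ∑ x : G, f x ^ 2 := fun s =>
    Fintype.sum_equiv (Equiv.mulRight s) _ _ fun x => rfl
  -- claim 2 : cross terms
  have hc2 : ∑ s ∈ S, ∑ x : G, f (x * s) * f x
      = ∑ s ∈ S, ∑ x : G, f (s⁻¹ * x) * f x := by
    rw [Finset.sum_comm, Finset.sum_comm (s := S)]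
    refine Finset.sum_congr rfl fun x _ => ?_
    -- for fixed x : ∑ s∈S, f (x*s) * f x = ∑ s∈S, f (s⁻¹*x) * f x
    -- first: s ↦ x * s * x⁻¹ bijection S → S, then s ↦ s⁻¹
    have step1 : ∑ s ∈ S, f (x * s) * f x = ∑ s ∈ S, f (s * x) * f x := by
      refine Finset.sum_nbij' (fun s => x * s * x⁻¹) (fun s => x⁻¹ * s * x) ?_ ?_ ?_ ?_ ?_
      · intro s hs
        exact hall x s hs
      · intro s hs
        have := hall x⁻¹ s hs
        simpa using this
      · intro s _
        group
      · intro s _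
        group
      · intro s _
        have : x * s * x⁻¹ * x = x * s := by
          group
        rw [this]
    have step2 : ∑ s ∈ S, f (s * x) * f x = ∑ s ∈ S, f (s⁻¹ * x) * f x := by
      refine Finset.sum_nbij' (fun s => s⁻¹) (fun s => s⁻¹) ?_ ?_ ?_ ?_ ?_
      · intro s hs
        exact hsym s hs
      · intro s hs
        exact hsym s hs
      · intro s _
        simp
      · intro s _
        simp
      · intro s _
        simp
    rw [step1, step2]
  -- expand everything
  have hexpand : ∀ s : G, uE G (fun x => (f (x * s) - f x) ^ 2)
      = (∑ x : G, f (x * s) ^ 2 + ∑ x : G, f x ^ 2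
          - 2 * ∑ x : G, f (x * s) * f x) / (Fintype.card G : ℝ) := by
    intro s
    unfold uE
    congr 1
    rw [← Finset.sum_add_distrib, Finset.mul_sum, ← Finset.sum_sub_distrib]
    refine Finset.sum_congr rfl fun x _ => ?_
    ring
  have hA : ∑ s ∈ S, (∑ x : G, f (x * s) ^ 2 + ∑ x : G, f x ^ 2
        - 2 * ∑ x : G, f (x * s) * f x)
      = 2 * (S.card : ℝ) * (∑ x : G, f x ^ 2)
        - 2 * ∑ s ∈ S, ∑ x : G, f (s⁻¹ * x) * f x := by
    rw [Finset.sum_congr rfl (fun s _ => by rw [hc1 s])]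
    rw [Finset.sum_sub_distrib, Finset.sum_add_distrib, Finset.sum_const,
      ← Finset.mul_sum, hc2]
    rw [nsmul_eq_mul]
    ring
  have hinner : ∀ x : G, f x * (f x - (S.card : ℝ)⁻¹ * ∑ s ∈ S, f (s⁻¹ * x))
      = f x ^ 2 - (S.card : ℝ)⁻¹ * ∑ s ∈ S, f (s⁻¹ * x) * f x := by
    intro x
    have hsm : (∑ s ∈ S, f (s⁻¹ * x)) * f x = ∑ s ∈ S, f (s⁻¹ * x) * f x :=
      by rw [Finset.sum_mul]
    calc f x * (f x - (S.card : ℝ)⁻¹ * ∑ s ∈ S, f (s⁻¹ * x))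
        = f x ^ 2 - (S.card : ℝ)⁻¹ * ((∑ s ∈ S, f (s⁻¹ * x)) * f x) := by ring
      _ = _ := by rw [hsm]
  have hE : Ecay G S f = ((∑ x : G, f x ^ 2)
      - (S.card : ℝ)⁻¹ * ∑ s ∈ S, ∑ x : G, f (s⁻¹ * x) * f x) / (Fintype.card G : ℝ) := by
    unfold Ecay uE Kop
    congr 1
    rw [Finset.sum_congr rfl fun x _ => hinner x, Finset.sum_sub_distrib, ← Finset.mul_sum,
      Finset.sum_comm]
  rw [Finset.sum_congr rfl fun s _ => hexpand s, ← Finset.sum_div, hA, hE]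
  have hcard : (Fintype.card G : ℝ) ≠ 0 := ne_of_gt cardG_pos
  field_simp

lemma uE_abs_sq_le (g : G → ℝ) :
    (uE G fun x => |g x|) ^ 2 ≤ uE G (fun x => g x ^ 2) := by
  unfold uE
  rw [div_pow, div_le_div_iff₀ (by positivity) cardG_pos]
  have h := sq_sum_le_card_mul_sum_sq (s := (Finset.univ : Finset G))
    (f := fun x => |g x|)
  rw [Finset.card_univ] at h
  have habs : ∑ x : G, |g x| ^ 2 = ∑ x : G, g x ^ 2 :=
    Finset.sum_congr rfl fun x _ => sq_abs _
  rw [habs] at h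
  have hc := cardG_pos (G := G)
  nlinarith [h, Finset.sum_nonneg (fun x (_ : x ∈ Finset.univ) => sq_nonneg (g x))]

lemma interp_term {a b η : ℝ} (ha : 0 ≤ a) (hab : a ≤ b) (hη0 : 0 < η) (hη1 : η < 1) :
    a ^ (1 - η) * b ^ η ≤ a ^ ((1 - η) / 2) * b ^ ((1 + η) / 2) := by
  have hb : 0 ≤ b := le_trans ha hab
  have hne : (1 - η) / 2 + (1 - η) / 2 ≠ 0 := by
    intro hcon
    nlinarith
  have h1 : a ^ (1 - η) = a ^ ((1 - η) / 2) * a ^ ((1 - η) / 2) := by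
    rw [← Real.rpow_add' ha hne]
    norm_num
  have hne2 : (1 - η) / 2 + η ≠ 0 := by
    intro hcon
    nlinarith
  have h2 : b ^ ((1 - η) / 2) * b ^ η = b ^ ((1 + η) / 2) := by
    rw [← Real.rpow_add' hb hne2]
    congr 1
    ring
  calc a ^ (1 - η) * b ^ η
      = a ^ ((1 - η) / 2) * (a ^ ((1 - η) / 2) * b ^ η) := by
        rw [h1]
        ring
    _ ≤ a ^ ((1 - η) / 2) * (b ^ ((1 - η) / 2) * b ^ η) := by
        refine mul_le_mul_of_nonneg_left ?_ (Real.rpow_nonneg ha _)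
        exact mul_le_mul_of_nonneg_right
          (Real.rpow_le_rpow ha hab (by linarith)) (Real.rpow_nonneg hb _)
    _ = a ^ ((1 - η) / 2) * b ^ ((1 + η) / 2) := by rw [h2]

lemma sum_geom_le (S : Finset G) (a b : G → ℝ)
    (ha : ∀ s ∈ S, 0 ≤ a s) (hb : ∀ s ∈ S, 0 ≤ b s)
    {α β : ℝ} (hα : 0 < α) (hβ : 0 < β) (hab : α + β = 1) :
    ∑ s ∈ S, a s ^ α * b s ^ β ≤ (∑ s ∈ S, a s) ^ α * (∑ s ∈ S, b s) ^ β := by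
  set A := ∑ s ∈ S, a s with hA
  set B := ∑ s ∈ S, b s with hB
  have hA0 : 0 ≤ A := Finset.sum_nonneg ha
  have hB0 : 0 ≤ B := Finset.sum_nonneg hb
  rcases eq_or_lt_of_le hA0 with hAz | hApos
  · -- A = 0 : all a s = 0
    have hzero : ∀ s ∈ S, a s = 0 :=
      (Finset.sum_eq_zero_iff_of_nonneg ha).1 hAz.symm
    have hL : ∑ s ∈ S, a s ^ α * b s ^ β = 0 := by
      refine Finset.sum_eq_zero fun s hs => ?_
      rw [hzero s hs, Real.zero_rpow (ne_of_gt hα), zero_mul]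
    rw [hL]
    exact mul_nonneg (Real.rpow_nonneg hA0 _) (Real.rpow_nonneg hB0 _)
  rcases eq_or_lt_of_le hB0 with hBz | hBpos
  · have hzero : ∀ s ∈ S, b s = 0 :=
      (Finset.sum_eq_zero_iff_of_nonneg hb).1 hBz.symm
    have hL : ∑ s ∈ S, a s ^ α * b s ^ β = 0 := by
      refine Finset.sum_eq_zero fun s hs => ?_
      rw [hzero s hs, Real.zero_rpow (ne_of_gt hβ), mul_zero]
    rw [hL]
    exact mul_nonneg (Real.rpow_nonneg hA0 _) (Real.rpow_nonneg hB0 _)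
  -- main case
  have hterm : ∀ s ∈ S, a s ^ α * b s ^ β
      ≤ (α * (a s / A) + β * (b s / B)) * (A ^ α * B ^ β) := by
    intro s hs
    have hgm := Real.geom_mean_le_arith_mean2_weighted hα.le hβ.le
      (div_nonneg (ha s hs) hA0) (div_nonneg (hb s hs) hB0) hab
    have hrw : (a s / A) ^ α * (b s / B) ^ β
        = (a s ^ α * b s ^ β) / (A ^ α * B ^ β) := by
      rw [Real.div_rpow (ha s hs) hA0, Real.div_rpow (hb s hs) hB0]
      ring
    rw [hrw] at hgm
    have hABpos : 0 < A ^ α * B ^ β :=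
      mul_pos (Real.rpow_pos_of_pos hApos _) (Real.rpow_pos_of_pos hBpos _)
    calc a s ^ α * b s ^ β
        = (a s ^ α * b s ^ β) / (A ^ α * B ^ β) * (A ^ α * B ^ β) := by
          field_simp
      _ ≤ (α * (a s / A) + β * (b s / B)) * (A ^ α * B ^ β) :=
          mul_le_mul_of_nonneg_right hgm hABpos.le
  calc ∑ s ∈ S, a s ^ α * b s ^ β
      ≤ ∑ s ∈ S, (α * (a s / A) + β * (b s / B)) * (A ^ α * B ^ β) :=
        Finset.sum_le_sum hterm
    _ = (∑ s ∈ S, (α * (a s / A) + β * (b s / B))) * (A ^ α * B ^ β) := by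
        rw [← Finset.sum_mul]
    _ = (α + β) * (A ^ α * B ^ β) := by
        rw [Finset.sum_add_distrib, ← Finset.mul_sum, ← Finset.mul_sum,
          ← Finset.sum_div, ← Finset.sum_div, ← hA, ← hB,
          div_self (ne_of_gt hApos), div_self (ne_of_gt hBpos), mul_one, mul_one]
    _ = A ^ α * B ^ β := by
        rw [hab, one_mul]

lemma uVar_zero_of_subsingleton (hsub : Subsingleton G) (h : G → ℝ) : uVar G h = 0 := by
  have hconst : ∀ x, h x = h 1 := fun x => by rw [Subsingleton.elim x 1]
  have huE : ∀ (pphi : G → ℝ) (c : ℝ), (∀ x, pphi x = c) → uE G pphi = c := by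
    intro pphi c hpphi
    unfold uE
    rw [Finset.sum_congr rfl fun x _ => hpphi x, Finset.sum_const, Finset.card_univ,
      nsmul_eq_mul]
    rw [mul_comm, mul_div_assoc, div_self (ne_of_gt (cardG_pos (G := G))), mul_one]
  unfold uVar
  rw [huE (fun g => h g ^ 2) (h 1 ^ 2) (fun x => by show h x ^ 2 = h 1 ^ 2; rw [hconst x]),
    huE h (h 1) hconst]
  ring

end Stmt10

/-- there is a universal `C > 0` such that for every finite group `G` with a
symmetric, generating, conjugation-closed set `S`, spectral-gap constant `λ` and
log-Sobolev constant `ρ` of the associated Cayley kernel, every `f : G → ℝ` and `t ≥ 0`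
satisfy
`Var_μ(P_t f) ≤ (C/λ) (∑_{s∈S} ‖D_s f‖₁²)^{(1-e^{-ρt})/2} (∑_{s∈S} ‖D_s f‖₂²)^{(1+e^{-ρt})/2}`,
with `D_s f (g) = f (gs) - f g`. -/
theorem stmt10 :
    ∃ C : ℝ, 0 < C ∧
      ∀ (G : Type) [Group G] [Fintype G] [DecidableEq G],
        ∀ S : Finset G,
          (∀ s ∈ S, s⁻¹ ∈ S) →
          Subgroup.closure (S : Set G) = ⊤ →
          (∀ s ∈ S, ∀ u ∈ S, s * u * s⁻¹ ∈ S) →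
          ∀ lam ρ : ℝ, 0 < lam → 0 < ρ →
          (∀ g : G → ℝ, lam * uVar G g ≤ Ecay G S g) →
          (∀ g : G → ℝ, ρ * uEnt G (fun x => g x ^ 2) ≤ 2 * Ecay G S g) →
          ∀ f : G → ℝ, ∀ t : ℝ, 0 ≤ t →
            uVar G (Pcay G S t f) ≤
              (C / lam) *
                (∑ s ∈ S, (uE G fun g => |f (g * s) - f g|) ^ 2) ^
                  ((1 - Real.exp (-ρ * t)) / 2) *
                (∑ s ∈ S, uE G fun g => (f (g * s) - f g) ^ 2) ^
                  ((1 + Real.exp (-ρ * t)) / 2) := by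
  classical
  refine ⟨1, one_pos, ?_⟩
  intro G _ _ _ S hsym hgen hconj lam ρ hlam hρ hP hLS f t ht
  set η := Real.exp (-ρ * t) with hη
  set A := ∑ s ∈ S, (uE G fun g => |f (g * s) - f g|) ^ 2 with hA
  set B := ∑ s ∈ S, uE G fun g => (f (g * s) - f g) ^ 2 with hB
  have hA0 : 0 ≤ A :=
    Finset.sum_nonneg fun s _ => sq_nonneg _
  have hB0 : 0 ≤ B :=
    Finset.sum_nonneg fun s _ => Stmt10.uE_nonneg fun x => sq_nonneg _
  by_cases hSne : S.Nonempty
  swap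
  · -- S empty, G subsingleton
    rw [Finset.not_nonempty_iff_eq_empty] at hSne
    subst hSne
    have hempty : ((∅ : Finset G) : Set G) = (∅ : Set G) := by simp
    rw [hempty, Subgroup.closure_empty] at hgen
    have hsub : Subsingleton G := by
      constructor
      intro a b
      have ha : a ∈ (⊥ : Subgroup G) := by rw [hgen]; trivial
      have hb : b ∈ (⊥ : Subgroup G) := by rw [hgen]; trivial
      rw [Subgroup.mem_bot] at ha hb
      rw [ha, hb]
    rw [Stmt10.uVar_zero_of_subsingleton hsub]
    have h1 : (0:ℝ) ≤ A ^ ((1 - η) / 2) := Real.rpow_nonneg hA0 _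
    have h2 : (0:ℝ) ≤ B ^ ((1 + η) / 2) := Real.rpow_nonneg hB0 _
    have h3 : (0:ℝ) ≤ (1:ℝ) / lam := by positivity
    exact mul_nonneg (mul_nonneg h3 h1) h2
  -- main case
  have h1 : lam * uVar G (Pcay G S t f) ≤ Ecay G S (Pcay G S t f) := hP _
  have h2 := Stmt10.sum_Dsq S hSne hsym hgen hconj (Pcay G S t f)
  have hsum_nonneg : 0 ≤ ∑ s ∈ S, uE G (fun x => (Pcay G S t f (x * s) - Pcay G S t f x) ^ 2) :=
    Finset.sum_nonneg fun s _ => Stmt10.uE_nonneg fun x => sq_nonneg _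
  have hcard1 : (1:ℝ) ≤ (S.card : ℝ) := by
    have := Finset.card_pos.2 hSne
    exact_mod_cast this
  have h3 : Ecay G S (Pcay G S t f)
      ≤ ∑ s ∈ S, uE G (fun x => (Pcay G S t f (x * s) - Pcay G S t f x) ^ 2) := by
    nlinarith [h2, hsum_nonneg, hcard1]
  have h4 : ∑ s ∈ S, uE G (fun x => (Pcay G S t f (x * s) - Pcay G S t f x) ^ 2)
      ≤ A ^ ((1 - η) / 2) * B ^ ((1 + η) / 2) := by
    rcases eq_or_lt_of_le ht with ht0 | htpos
    · -- t = 0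
      have ht0' : t = 0 := ht0.symm
      subst ht0'
      have hη1 : η = 1 := by
        rw [hη]
        norm_num
      have he1 : (1 - η) / 2 = 0 := by rw [hη1]; norm_num
      have he2 : (1 + η) / 2 = 1 := by rw [hη1]; norm_num
      rw [he1, he2, Real.rpow_zero, Real.rpow_one, one_mul]
      have hPz : ∀ s ∈ S, uE G (fun x => (Pcay G S 0 f (x * s) - Pcay G S 0 f x) ^ 2)
          = uE G (fun x => (f (x * s) - f x) ^ 2) := by
        intro s _
        rw [Stmt10.Pcay_zero_time]
      rw [Finset.sum_congr rfl hPz]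
    · -- t > 0
      have hη1 : η < 1 := by
        rw [hη]
        apply Real.exp_lt_one_iff.2 ?_
        nlinarith
      have hη0 : 0 < η := Real.exp_pos _
      have hterm : ∀ s ∈ S, uE G (fun x => (Pcay G S t f (x * s) - Pcay G S t f x) ^ 2)
          ≤ ((uE G fun x => |f (x * s) - f x|) ^ 2) ^ ((1 - η) / 2)
            * (uE G fun x => (f (x * s) - f x) ^ 2) ^ ((1 + η) / 2) := by
        intro s _
        have hDs := Stmt10.Pcay_D_comm S t f s
        have hrw : (fun x => (Pcay G S t f (x * s) - Pcay G S t f x) ^ 2)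
            = fun x => Pcay G S t (fun y => f (y * s) - f y) x ^ 2 := by
          funext x
          rw [congrFun hDs x]
        rw [hrw]
        have hdec := Stmt10.l2_decay S hSne hρ hLS (fun y => f (y * s) - f y) ht
        refine hdec.trans ?_
        exact Stmt10.interp_term (sq_nonneg _) (Stmt10.uE_abs_sq_le _) hη0 hη1
      refine (Finset.sum_le_sum hterm).trans ?_
      exact Stmt10.sum_geom_le S _ _ (fun s _ => sq_nonneg _)
        (fun s _ => Stmt10.uE_nonneg fun x => sq_nonneg _)
        (by linarith) (by linarith) (by ring)
  have hfinal : lam * uVar G (Pcay G S t f) ≤ A ^ ((1 - η) / 2) * B ^ ((1 + η) / 2) :=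
    h1.trans (h3.trans h4)
  have hgoal : uVar G (Pcay G S t f)
      ≤ (A ^ ((1 - η) / 2) * B ^ ((1 + η) / 2)) / lam := by
    rw [le_div_iff₀ hlam]
    nlinarith [hfinal]
  refine hgoal.trans ?_
  have : (1:ℝ) / lam * A ^ ((1 - η) / 2) * B ^ ((1 + η) / 2)
      = (A ^ ((1 - η) / 2) * B ^ ((1 + η) / 2)) / lam := by
    ring
  rw [this]
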